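/- Let m ≥ 2, N ≥ 1, G = GL(m, ℝ), H = {h ∈ G : h e₁ = e₁}. For ξ, η ∈ gl(m, ℝ) define r̂(ξ ⊗ η) := Σ_{i>j} ξ_{ji} η_{ij} + ½ Σ_r ξ_{rr} η_{rr} and r̂(ξ ∧ η) := ½(r̂(ξ ⊗ η) − r̂(η ⊗ ξ)). For differentiable F : G^N → ℝ define gradients ∇_s F(A), ∇'_s F(A) ∈ gl(m, ℝ) by (d/dε)|₀ F(… e^{εξ} A_s …) = tr(∇_s F · ξ) and (d/dε)|₀ F(… A_s e^{εξ} …) = tr(∇'_s F · ξ), and define the twisted bracket {F, G}(A) := Σ_s r̂(∇_s F ∧ ∇_s G) + Σ_s r̂(∇'_s F ∧ ∇'_s G) − Σ_s r̂(∇'_{s+1} F ⊗ ∇_s G) + Σ_s r̂(∇'_{s+1} G ⊗ ∇_s F), with cyclic index s ∈ ℤ/N. Suppose F and G are invariant under the right gauge action of H^N: F((h_{s+1} A_s h_s^{−1})_s) = F(A) for all h ∈ H^N, and likewise for G. Let A = (A_s)_s where A_s is the companion matrix whose first m−1 columns are e₂, …, e_m and last column is (a⁰_s, …, a^{m−1}_s)ᵀ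 with a⁰_s ≠ 0. Then {F, G}(A) = ⟨∇F − 𝒯∇'F, ∇G⟩(A) − ½ ⟨∇F − 𝒯∇'F, ∇G − 𝒯∇'G⟩(A), where ⟨X, Y⟩ := Σ_{s∈ℤ/N} tr(X_s Y_s) and (𝒯X)_s := X_{s+1}. -/

import Mathlib

noncomputable section

/-- `m × m` real matrices, as plain functions (so that the product normed space
structure of `Fin m → Fin m → ℝ` is available). -/
abbrev Mat (m : ℕ) : Type := Fin m → Fin m → ℝ

/-- Matrix product. -/
def mmul {m : ℕ} (X Y : Mat m) : Mat m := fun i j => ∑ k, X i k * Y k j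

/-- Matrix trace. -/
def mtrace {m : ℕ} (X : Mat m) : ℝ := ∑ i, X i i

/-- Identity matrix. -/
def midm (m : ℕ) : Mat m := fun i j => if i = j then 1 else 0

/-- Matrix-vector product. -/
def mvec {m : ℕ} (X : Mat m) (v : Fin m → ℝ) : Fin m → ℝ := fun i => ∑ j, X i j * v j

/-- The first standard basis vector `e₁` of `ℝ^m`. -/
def e1vec (m : ℕ) : Fin m → ℝ := fun i => if (i : ℕ) = 0 then 1 else 0

/-- The companion-type matrix `A(a)` whose first `m−1` columns are `e₂, …, e_m` and whose
last column is `(a⁰, a¹, …, a^{m−1})ᵀ`. -/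
def Amat {m : ℕ} (a : Fin m → ℝ) : Mat m := fun i j =>
  if (j : ℕ) = m - 1 then a i else if (i : ℕ) = (j : ℕ) + 1 then 1 else 0

/-- The pairing of the standard `r`-matrix
`r̂ = Σ_{i>j} E_{ij} ⊗ E_{ji} + ½ Σ_r E_{rr} ⊗ E_{rr}` of `gl(m)` against `ξ ⊗ η`:
`r̂(ξ ⊗ η) = Σ_{i>j} ξ_{ji} η_{ij} + ½ Σ_r ξ_{rr} η_{rr}`. -/
def rhatT {m : ℕ} (ξ η : Mat m) : ℝ :=
  (∑ i : Fin m, ∑ j : Fin m, if j < i then ξ j i * η i j else 0)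
    + (1 / 2) * ∑ r : Fin m, ξ r r * η r r

/-- `r̂(ξ ∧ η) = ½(r̂(ξ ⊗ η) − r̂(η ⊗ ξ))`. -/
def rhatW {m : ℕ} (ξ η : Mat m) : ℝ := (rhatT ξ η - rhatT η ξ) / 2

lemma mmul_assoc {m : ℕ} (X Y Z : Mat m) : mmul (mmul X Y) Z = mmul X (mmul Y Z) := by
  funext i j
  simp only [mmul, Finset.sum_mul, Finset.mul_sum]
  rw [Finset.sum_comm]
  congr 1; ext k; congr 1; ext l; ring

lemma midm_mmul {m : ℕ} (X : Mat m) : mmul (midm m) X = X := by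
  funext i j; simp [mmul, midm, Finset.sum_ite_eq]

lemma mmul_midm {m : ℕ} (X : Mat m) : mmul X (midm m) = X := by
  funext i j; simp [mmul, midm, Finset.sum_ite_eq]

lemma mtrace_mmul_comm {m : ℕ} (X Y : Mat m) : mtrace (mmul X Y) = mtrace (mmul Y X) := by
  simp only [mtrace, mmul]
  rw [Finset.sum_comm]
  congr 1; ext k; congr 1; ext i; ring

def Ematrix {m : ℕ} (k l : Fin m) : Mat m := fun i j => if i = k ∧ j = l then 1 else 0

lemma mtrace_mmul_E {m : ℕ} (M : Mat m) (k l : Fin m) :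
    mtrace (mmul M (Ematrix k l)) = M l k := by
  simp [mtrace, mmul, Ematrix]
  rw [Finset.sum_eq_single l] <;> simp +contextual [Finset.sum_ite_eq]

/-- explicit inverse of the companion matrix -/
def Binv {m : ℕ} (a : Fin m → ℝ) : Mat m := fun i j =>
  if (j : ℕ) = 0 then
    (if h : (i : ℕ) + 1 < m then -(a ⟨(i : ℕ) + 1, h⟩) / a ⟨0, i.pos⟩
     else 1 / a ⟨0, i.pos⟩)
  else if (i : ℕ) + 1 = (j : ℕ) then 1 else 0

lemma sum_if_coe {m c : ℕ} (hc : c < m) (f : Fin m → ℝ) :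
    (∑ k : Fin m, if (k : ℕ) = c then f k else 0) = f ⟨c, hc⟩ := by
  rw [Finset.sum_eq_single ⟨c, hc⟩] <;> simp +contextual [Fin.ext_iff]

lemma Amat_mul_Binv {m : ℕ} (a : Fin m → ℝ) (h0 : ∀ h : 0 < m, a ⟨0, h⟩ ≠ 0) :
    mmul (Amat a) (Binv a) = midm m := by
  funext i j
  have hm : 0 < m := i.pos
  have hsplit : ∀ k : Fin m, Amat a i k * Binv a k j =
      (if (k : ℕ) = m - 1 then a i * Binv a k j else 0)
      + (if (k : ℕ) = (i : ℕ) - 1 ∧ (i : ℕ) ≠ 0 then Binv a k j else 0) := by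
    intro k
    simp only [Amat]
    rcases eq_or_ne (k : ℕ) (m - 1) with hk | hk
    · simp only [hk, if_pos rfl]
      have : ¬((m : ℕ) - 1 = (i : ℕ) - 1 ∧ (i : ℕ) ≠ 0) ∨ True := Or.inr trivial
      have h2 : (i : ℕ) < m := i.isLt
      have : ¬((m : ℕ) - 1 = (i:ℕ) - 1 ∧ (i:ℕ) ≠ 0) ∧ ¬((k:ℕ) = (i:ℕ) - 1 ∧ (i:ℕ) ≠ 0) ∨
          ((m : ℕ) - 1 = (i:ℕ) - 1 ∧ (i:ℕ) ≠ 0) ∧ ((k:ℕ) = (i:ℕ) - 1 ∧ (i:ℕ) ≠ 0) := by omega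
      rcases this with ⟨-, h4⟩ | ⟨h3, -⟩
      · have h5 : ¬((m : ℕ) - 1 = (i : ℕ) - 1 ∧ (i : ℕ) ≠ 0) := by omega
        rw [if_neg h5, add_zero, if_pos trivial, if_pos trivial]
      · exfalso; omega
    · simp only [if_neg hk]
      rcases eq_or_ne ((i : ℕ)) ((k : ℕ) + 1) with hi | hi
      · have hc : (k : ℕ) = (i : ℕ) - 1 ∧ (i : ℕ) ≠ 0 := by omega
        rw [if_pos hi, one_mul, zero_add, if_pos hc]
      · have hc : ¬((k : ℕ) = (i : ℕ) - 1 ∧ (i : ℕ) ≠ 0) := by omega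
        rw [if_neg hi, zero_mul, zero_add, if_neg hc]
  simp only [mmul, hsplit, Finset.sum_add_distrib]
  have hlast : m - 1 < m := by omega
  rw [sum_if_coe hlast]
  rcases eq_or_ne (i : ℕ) 0 with hi | hi
  · -- i = 0 : second sum vanishes
    have : (∑ k : Fin m, if (k : ℕ) = (i : ℕ) - 1 ∧ (i : ℕ) ≠ 0 then Binv a k j else 0) = 0 := by
      apply Finset.sum_eq_zero; intro k _; simp [hi]
    rw [this, add_zero]
    simp only [Binv]
    rcases eq_or_ne (j : ℕ) 0 with hj | hj
    · have : ¬ ((m:ℕ) - 1 + 1 < m) := by omega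
      have hieq : i = ⟨0, hm⟩ := Fin.ext hi
      simp only [hj, if_pos rfl, dif_neg this, midm, hieq]
      have : (⟨0, hm⟩ : Fin m) = j := Fin.ext (by simp [Eq.symm hj])
      rw [if_pos this]
      simp only [if_pos trivial, one_mul, mul_one_div]
      exact div_self (h0 hm)
    · have h2 : ¬((m : ℕ) - 1 + 1 = (j : ℕ)) := by have := j.isLt; omega
      simp [hj, h2, midm, Fin.ext_iff, hi, Ne.symm hj]
  · -- i ≥ 1
    have hi1 : (i : ℕ) - 1 < m := by have := i.isLt; omega
    have : (∑ k : Fin m, if (k : ℕ) = (i : ℕ) - 1 ∧ (i : ℕ) ≠ 0 then Binv a k j else 0)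
        = Binv a ⟨(i : ℕ) - 1, hi1⟩ j := by
      rw [Finset.sum_eq_single ⟨(i : ℕ) - 1, hi1⟩] <;> simp +contextual [Fin.ext_iff, hi]
    rw [this]
    simp only [Binv]
    rcases eq_or_ne (j : ℕ) 0 with hj | hj
    · have h1 : ¬ ((m:ℕ) - 1 + 1 < m) := by omega
      have h2 : (i : ℕ) - 1 + 1 < m := by have := i.isLt; omega
      have h3 : ((⟨(i:ℕ)-1+1, h2⟩ : Fin m) : ℕ) = (i : ℕ) := by simp; omega
      simp only [hj, if_pos rfl, dif_neg h1, dif_pos h2]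
      have : (⟨(i:ℕ)-1+1, h2⟩ : Fin m) = i := by simp [Fin.ext_iff]; omega
      rw [this]
      have hne : i ≠ j := by intro h; rw [h] at hi; exact hi hj
      simp [midm, hne]
      field_simp
      ring
    · have h1 : ¬((m : ℕ) - 1 + 1 = (j : ℕ)) := by have := j.isLt; omega
      simp only [hj, if_neg hj, if_neg h1, mul_zero, zero_add]
      by_cases hij : (i : ℕ) - 1 + 1 = (j : ℕ)
      · have : i = j := by apply Fin.ext; omega
        simp [midm, this]
        omega
      · have : i ≠ j := by intro h; apply hij; subst h; omega
        simp [hij, midm, this]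

lemma Binv_mul_Amat {m : ℕ} (a : Fin m → ℝ) (h0 : ∀ h : 0 < m, a ⟨0, h⟩ ≠ 0) :
    mmul (Binv a) (Amat a) = midm m := by
  funext i j
  have hm : 0 < m := i.pos
  have hsplit : ∀ k : Fin m, Binv a i k * Amat a k j =
      (if (k : ℕ) = 0 then
        (if h : (i : ℕ) + 1 < m then -(a ⟨(i : ℕ) + 1, h⟩) / a ⟨0, i.pos⟩
         else 1 / a ⟨0, i.pos⟩) * Amat a k j else 0)
      + (if (k : ℕ) = (i : ℕ) + 1 then Amat a k j else 0) := by
    intro k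
    simp only [Binv]
    rcases eq_or_ne (k : ℕ) 0 with hk | hk
    · have h2 : ¬((k : ℕ) = (i : ℕ) + 1) := by omega
      rw [if_pos hk, if_pos hk, if_neg h2, add_zero]
    · rw [if_neg hk, if_neg hk]
      rcases eq_or_ne ((i : ℕ) + 1) ((k : ℕ)) with hi | hi
      · rw [if_pos hi, if_pos hi.symm, one_mul, zero_add]
      · rw [if_neg hi, if_neg (Ne.symm hi), zero_mul, zero_add]
  simp only [mmul, hsplit, Finset.sum_add_distrib]
  rw [sum_if_coe hm]
  have hsnd : (∑ k : Fin m, if (k : ℕ) = (i : ℕ) + 1 then Amat a k j else 0)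
      = if h : (i : ℕ) + 1 < m then Amat a ⟨(i : ℕ) + 1, h⟩ j else 0 := by
    by_cases h : (i : ℕ) + 1 < m
    · rw [dif_pos h, sum_if_coe h]
    · rw [dif_neg h]
      apply Finset.sum_eq_zero; intro k _
      have : ¬((k : ℕ) = (i : ℕ) + 1) := by have := k.isLt; omega
      rw [if_neg this]
  rw [hsnd]
  have hA0 : Amat a ⟨0, hm⟩ j = if (j : ℕ) = m - 1 then a ⟨0, hm⟩ else 0 := by
    simp only [Amat]
    rcases eq_or_ne ((j : ℕ)) (m - 1) with hj | hj
    · rw [if_pos hj, if_pos hj]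
    · rw [if_neg hj, if_neg hj, if_neg (by omega)]
  rw [hA0]
  rcases eq_or_ne ((j : ℕ)) (m - 1) with hj | hj
  · rw [if_pos hj]
    by_cases h : (i : ℕ) + 1 < m
    · have hij : i ≠ j := by intro e; subst e; omega
      rw [dif_pos h, dif_pos h]
      simp only [Amat, if_pos hj, midm, if_neg hij]
      have hz : a ⟨0, i.pos⟩ ≠ 0 := h0 _
      field_simp
      ring
    · have hij : i = j := by apply Fin.ext; have := i.isLt; omega
      rw [dif_neg h, dif_neg h, add_zero]
      simp only [midm, if_pos hij]
      rw [one_div, inv_mul_cancel₀ (h0 hm)]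
  · rw [if_neg hj, mul_zero, zero_add]
    by_cases h : (i : ℕ) + 1 < m
    · rw [dif_pos h]
      simp only [Amat, if_neg hj, midm]
      by_cases hij : i = j
      · have hc : ((⟨(i:ℕ)+1, h⟩ : Fin m) : ℕ) = (j : ℕ) + 1 := by
          simp only [Fin.ext_iff] at hij; simp [hij]
        rw [if_pos hc, if_pos hij]
      · have hc : ¬(((⟨(i:ℕ)+1, h⟩ : Fin m) : ℕ) = (j : ℕ) + 1) := by
          simp only [Fin.ext_iff] at hij; simp only [Fin.val_mk]; omega
        rw [if_neg hc, if_neg hij]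
    · rw [dif_neg h]
      have hij : i ≠ j := by intro e; subst e; have := i.isLt; omega
      simp [midm, hij]

private lemma ite_sub_zero (p : Prop) [Decidable p] (a b : ℝ) :
    (if p then a - b else 0) = (if p then a else 0) - (if p then b else 0) := by
  split <;> simp

lemma rhatT_sub_left {m : ℕ} (X X' Y : Mat m) :
    rhatT (X - X') Y = rhatT X Y - rhatT X' Y := by
  simp only [rhatT, Pi.sub_apply, sub_mul, ite_sub_zero, Finset.sum_sub_distrib]
  ring

lemma rhatT_sub_right {m : ℕ} (X Y Y' : Mat m) :
    rhatT X (Y - Y') = rhatT X Y - rhatT X Y' := by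
  simp only [rhatT, Pi.sub_apply, mul_sub, ite_sub_zero, Finset.sum_sub_distrib]
  ring

/-- splitting a double sum by trichotomy -/
lemma sum_split_tri {m : ℕ} (f : Fin m → Fin m → ℝ) :
    (∑ i : Fin m, ∑ j : Fin m, f i j)
      = (∑ i : Fin m, ∑ j : Fin m, if j < i then f i j else 0)
      + (∑ i : Fin m, ∑ j : Fin m, if j < i then f j i else 0)
      + (∑ r : Fin m, f r r) := by
  have h1 : (∑ i : Fin m, ∑ j : Fin m, if i < j then f i j else 0)
      = (∑ i : Fin m, ∑ j : Fin m, if j < i then f j i else 0) := by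
    rw [Finset.sum_comm]
  have h2 : (∑ i : Fin m, ∑ j : Fin m, if i = j then f i j else 0)
      = ∑ r : Fin m, f r r := by
    simp [Finset.sum_ite_eq]
  rw [← h1, ← h2, ← Finset.sum_add_distrib, ← Finset.sum_add_distrib]
  congr 1; ext i
  rw [← Finset.sum_add_distrib, ← Finset.sum_add_distrib]
  congr 1; ext j
  rcases lt_trichotomy i j with h | h | h
  · simp [h, asymm h, h.ne]
  · simp [h, lt_irrefl]
  · simp [h, asymm h, h.ne']

lemma rhatT_add_swap {m : ℕ} (X Y : Mat m) :
    rhatT X Y + rhatT Y X = mtrace (mmul X Y) := by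
  have htr : mtrace (mmul X Y) = ∑ i : Fin m, ∑ j : Fin m, X i j * Y j i := by
    simp [mtrace, mmul]
  rw [htr, sum_split_tri (fun i j => X i j * Y j i)]
  simp only [rhatT]
  have hc : (∑ i : Fin m, ∑ j : Fin m, if j < i then Y j i * X i j else 0)
      = ∑ i : Fin m, ∑ j : Fin m, if j < i then X i j * Y j i else 0 := by
    refine Finset.sum_congr rfl fun i _ => Finset.sum_congr rfl fun j _ => ?_
    split <;> ring
  have hd : (∑ r : Fin m, Y r r * X r r) = ∑ r : Fin m, X r r * Y r r := by
    refine Finset.sum_congr rfl fun r _ => by ring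
  rw [hc, hd]
  ring

/-- row-0 support symmetry -/
lemma rhatT_symm_row0 {m : ℕ} (D E : Mat m)
    (hD : ∀ i j : Fin m, (i : ℕ) ≠ 0 → D i j = 0)
    (hE : ∀ i j : Fin m, (i : ℕ) ≠ 0 → E i j = 0) :
    rhatT D E = rhatT E D := by
  have key : ∀ (P Q : Mat m), (∀ i j : Fin m, (i : ℕ) ≠ 0 → P i j = 0) →
      (∀ i j : Fin m, (i : ℕ) ≠ 0 → Q i j = 0) →
      (∑ i : Fin m, ∑ j : Fin m, if j < i then P j i * Q i j else 0) = 0 := by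
    intro P Q hP hQ
    refine Finset.sum_eq_zero fun i _ => Finset.sum_eq_zero fun j _ => ?_
    split
    · next h =>
      have : (i : ℕ) ≠ 0 := by
        have : (j : ℕ) < (i : ℕ) := h
        omega
      rw [hQ i j this, mul_zero]
    · rfl
  simp only [rhatT, key D E hD hE, key E D hE hD]
  have : (∑ r : Fin m, D r r * E r r) = ∑ r : Fin m, E r r * D r r :=
    Finset.sum_congr rfl fun r _ => by ring
  rw [this]

lemma mtrace_mmul_sub_left {m : ℕ} (X X' Y : Mat m) :
    mtrace (mmul (X - X') Y) = mtrace (mmul X Y) - mtrace (mmul X' Y) := by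
  simp only [mtrace, mmul, Pi.sub_apply, sub_mul, Finset.sum_sub_distrib]

lemma mtrace_mmul_sub_right {m : ℕ} (X Y Y' : Mat m) :
    mtrace (mmul X (Y - Y')) = mtrace (mmul X Y) - mtrace (mmul X Y') := by
  simp only [mtrace, mmul, Pi.sub_apply, mul_sub, Finset.sum_sub_distrib]

lemma mmul_add_left {m : ℕ} (P Q R : Mat m) : mmul (P + Q) R = mmul P R + mmul Q R := by
  funext i j; simp [mmul, add_mul, Finset.sum_add_distrib]

lemma mmul_add_right {m : ℕ} (P Q R : Mat m) : mmul P (Q + R) = mmul P Q + mmul P R := by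
  funext i j; simp [mmul, mul_add, Finset.sum_add_distrib]

lemma mmul_smul_left {m : ℕ} (t : ℝ) (P R : Mat m) : mmul (t • P) R = t • mmul P R := by
  funext i j; simp [mmul, Finset.mul_sum, mul_assoc]

lemma mmul_smul_right {m : ℕ} (t : ℝ) (P R : Mat m) : mmul P (t • R) = t • mmul P R := by
  funext i j; simp [mmul, Finset.mul_sum]; congr 1; ext k; ring

lemma midm_mmul' {m : ℕ} (X : Mat m) : mmul (midm m) X = X := by
  funext i j; simp [mmul, midm, Finset.sum_ite_eq]

lemma mmul_midm' {m : ℕ} (X : Mat m) : mmul X (midm m) = X := by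
  funext i j; simp [mmul, midm, Finset.sum_ite_eq]

lemma Ematrix_mul_self {m : ℕ} (k l : Fin m) :
    mmul (Ematrix k l) (Ematrix k l) = (if l = k then (1:ℝ) else 0) • Ematrix k l := by
  funext i j
  simp only [mmul, Ematrix, Pi.smul_apply, smul_eq_mul]
  rw [Finset.sum_eq_single l]
  · by_cases h1 : i = k <;> by_cases h2 : j = l <;> by_cases h3 : l = k <;>
      simp [h1, h2, h3]
  · intro b _ hb
    have : ¬(i = k ∧ b = l) ∨ ¬(b = k ∧ j = l) := by
      by_cases h : b = l
      · exact (hb h).elim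
      · exact Or.inl (fun hc => h hc.2)
    rcases this with h | h
    · rw [if_neg h, zero_mul]
    · rw [if_neg h, mul_zero]
  · simp

lemma sum_if_coe' {m c : ℕ} (hc : c < m) (f : Fin m → ℝ) :
    (∑ k : Fin m, if (k : ℕ) = c then f k else 0) = f ⟨c, hc⟩ := by
  rw [Finset.sum_eq_single ⟨c, hc⟩] <;> simp +contextual [Fin.ext_iff]

/-- gauge curve matrix `I + t E` -/
def addE {m : ℕ} (k l : Fin m) (t : ℝ) : Mat m := midm m + t • Ematrix k l

lemma addE_mul {m : ℕ} (k l : Fin m) (t u : ℝ) :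
    mmul (addE k l t) (addE k l u) =
      midm m + (t + u + t * u * (if l = k then (1:ℝ) else 0)) • Ematrix k l := by
  simp only [addE, mmul_add_left, mmul_add_right, mmul_smul_left, mmul_smul_right,
    midm_mmul', mmul_midm', Ematrix_mul_self, smul_smul]
  funext i j
  simp only [Pi.add_apply, Pi.smul_apply, smul_eq_mul]
  ring

lemma addE_vec {m : ℕ} (k l : Fin m) (hl : (l : ℕ) ≠ 0) (t : ℝ) :
    mvec (addE k l t) (e1vec m) = e1vec m := by
  funext i
  have hm : 0 < m := i.pos
  simp only [mvec, addE, e1vec, Pi.add_apply, Pi.smul_apply, smul_eq_mul, mul_ite, mul_one,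
    mul_zero]
  rw [Finset.sum_congr rfl (fun j _ => by
    exact if_congr Iff.rfl rfl rfl : ∀ j ∈ Finset.univ, _ = _)]
  rw [sum_if_coe' hm]
  have h1 : ¬((⟨0, hm⟩ : Fin m) = l) := by
    intro h; apply hl; rw [← h]
  simp only [midm, Ematrix, h1, and_false, if_false, mul_zero, add_zero]
  by_cases h : i = ⟨0, hm⟩
  · simp [h, Fin.ext_iff]
  · have : ¬((i : ℕ) = 0) := by simp only [Fin.ext_iff] at h; exact h
    simp [h, this]

lemma mvec_midm {m : ℕ} (v : Fin m → ℝ) : mvec (midm m) v = v := by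
  funext i; simp [mvec, midm, Finset.sum_ite_eq]

lemma expand_two {m : ℕ} (X E1 E2 : Mat m) (t u : ℝ) :
    mmul (midm m + t • E1) (mmul X (midm m + u • E2))
      = X + t • mmul E1 X + u • mmul X E2 + (t * u) • mmul E1 (mmul X E2) := by
  have h1 : mmul X (midm m + u • E2) = X + u • mmul X E2 := by
    rw [mmul_add_right, mmul_midm', mmul_smul_right]
  rw [h1, mmul_add_left, midm_mmul', mmul_smul_left, mmul_add_right, mmul_smul_right]
  module

lemma grad_row_support {m N : ℕ} [NeZero N] (F : (ZMod N → Mat m) → ℝ)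
    (hF : Differentiable ℝ F)
    (hinvF : ∀ h hi : ZMod N → Mat m,
      (∀ s, mmul (h s) (hi s) = midm m ∧ mmul (hi s) (h s) = midm m) →
      (∀ s, mvec (h s) (e1vec m) = e1vec m) →
      ∀ B : ZMod N → Mat m, F (fun s => mmul (h (s + 1)) (mmul (B s) (hi s))) = F B)
    (A gLF gRF : ZMod N → Mat m)
    (hgLF : ∀ (s : ZMod N) (ξ : Mat m),
      fderiv ℝ F A (Pi.single s (mmul ξ (A s))) = mtrace (mmul (gLF s) ξ))
    (hgRF : ∀ (s : ZMod N) (ξ : Mat m),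
      fderiv ℝ F A (Pi.single s (mmul (A s) ξ)) = mtrace (mmul (gRF s) ξ))
    (k l : Fin m) (hl : (l : ℕ) ≠ 0) (s : ZMod N) :
    gLF s l k = gRF (s + 1) l k := by
  classical
  set s₀ : ZMod N := s + 1 with hs₀
  set E : Mat m := Ematrix k l with hE
  set δ : ℝ := if l = k then 1 else 0 with hδ
  set g : ℝ → ℝ := fun t => -t / (1 + δ * t) with hgdef
  set P : ZMod N → Mat m := fun u => if u + 1 = s₀ then mmul E (A u) else 0 with hP
  set Q : ZMod N → Mat m := fun u => if u = s₀ then mmul (A u) E else 0 with hQ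
  set R : ZMod N → Mat m :=
    fun u => if u + 1 = s₀ ∧ u = s₀ then mmul E (mmul (A u) E) else 0 with hR
  set c : ℝ → ZMod N → Mat m :=
    fun t u => A u + t • P u + g t • Q u + (t * g t) • R u with hc
  have hg0 : g 0 = 0 := by simp [hgdef]
  have hgd : HasDerivAt g (-1) 0 := by
    have h1 : HasDerivAt (fun t : ℝ => -t) (-1) 0 := (hasDerivAt_id 0).neg
    have h2 : HasDerivAt (fun t : ℝ => 1 + δ * t) δ 0 := by
      simpa using ((hasDerivAt_id (0:ℝ)).const_mul δ).const_add (1:ℝ)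
    have hne : (1 : ℝ) + δ * 0 ≠ 0 := by norm_num
    have := h1.div h2 hne
    exact this.congr_deriv (by norm_num)
  have hc0 : c 0 = A := by
    funext u; simp [hc, hg0]
  -- the invariance along the curve
  have hceq : ∀ t : ℝ, 1 + δ * t ≠ 0 → F (c t) = F A := by
    intro t ht
    have hginv : t + g t + t * g t * δ = 0 := by
      have hD : -t / (1 + δ * t) * (1 + δ * t) = -t := div_mul_cancel₀ _ ht
      simp only [hgdef]; linear_combination hD
    set h : ZMod N → Mat m := fun u => if u = s₀ then addE k l t else midm m with hh
    set hi : ZMod N → Mat m := fun u => if u = s₀ then addE k l (g t) else midm m with hhi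
    have hprod : ∀ u, mmul (h u) (hi u) = midm m ∧ mmul (hi u) (h u) = midm m := by
      intro u
      by_cases hu : u = s₀
      · simp only [hh, hhi, if_pos hu]
        constructor
        · rw [addE_mul]
          have : t + g t + t * g t * (if l = k then (1:ℝ) else 0) = 0 := hginv
          rw [this, zero_smul, add_zero]
        · rw [addE_mul]
          have : g t + t + g t * t * (if l = k then (1:ℝ) else 0) = 0 := by
            rw [← hδ] at *; linarith [hginv, (by ring : g t * t * δ = t * g t * δ)]
          rw [this, zero_smul, add_zero]
      · simp only [hh, hhi, if_neg hu]
        exact ⟨midm_mmul' _, midm_mmul' _⟩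
    have hvec : ∀ u, mvec (h u) (e1vec m) = e1vec m := by
      intro u
      by_cases hu : u = s₀
      · simp only [hh, if_pos hu]; exact addE_vec k l hl t
      · simp only [hh, if_neg hu]; exact mvec_midm _
    have hFinv := hinvF h hi hprod hvec A
    have hcform : c t = fun u => mmul (h (u + 1)) (mmul (A u) (hi u)) := by
      funext u
      show A u + t • P u + g t • Q u + (t * g t) • R u = _
      by_cases h1 : u + 1 = s₀ <;> by_cases h2 : u = s₀
      · rw [show h (u + 1) = addE k l t from by simp only [hh, if_pos h1],
            show hi u = addE k l (g t) from by simp only [hhi, if_pos h2]]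
        simp only [addE]
        rw [expand_two]
        rw [show P u = mmul E (A u) from by simp only [hP, if_pos h1],
            show Q u = mmul (A u) E from by simp only [hQ, if_pos h2],
            show R u = mmul E (mmul (A u) E) from by
              simp only [hR, if_pos (show u + 1 = s₀ ∧ u = s₀ from ⟨h1, h2⟩)]]
      · rw [show h (u + 1) = addE k l t from by simp only [hh, if_pos h1],
            show hi u = midm m from by simp only [hhi, if_neg h2]]
        rw [mmul_midm', addE, mmul_add_left, midm_mmul', mmul_smul_left]
        rw [show P u = mmul E (A u) from by simp only [hP, if_pos h1],
            show Q u = 0 from by simp only [hQ, if_neg h2],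
            show R u = 0 from by
              simp only [hR, if_neg (show ¬(u + 1 = s₀ ∧ u = s₀) from fun hc => h2 hc.2)]]
        rw [smul_zero, smul_zero, add_zero, add_zero]
      · rw [show h (u + 1) = midm m from by simp only [hh, if_neg h1],
            show hi u = addE k l (g t) from by simp only [hhi, if_pos h2]]
        rw [midm_mmul', addE, mmul_add_right, mmul_midm', mmul_smul_right]
        rw [show P u = 0 from by simp only [hP, if_neg h1],
            show Q u = mmul (A u) E from by simp only [hQ, if_pos h2],
            show R u = 0 from by
              simp only [hR, if_neg (show ¬(u + 1 = s₀ ∧ u = s₀) from fun hc => h1 hc.1)]]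
        rw [smul_zero, smul_zero, add_zero, add_zero]
      · rw [show h (u + 1) = midm m from by simp only [hh, if_neg h1],
            show hi u = midm m from by simp only [hhi, if_neg h2]]
        rw [midm_mmul', mmul_midm']
        rw [show P u = 0 from by simp only [hP, if_neg h1],
            show Q u = 0 from by simp only [hQ, if_neg h2],
            show R u = 0 from by
              simp only [hR, if_neg (show ¬(u + 1 = s₀ ∧ u = s₀) from fun hc => h1 hc.1)]]
        rw [smul_zero, smul_zero, smul_zero, add_zero, add_zero, add_zero]
    rw [hcform]
    exact hFinv
  -- derivative of the curve
  have hcd : HasDerivAt c (fun u => P u - Q u) 0 := by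
    rw [hasDerivAt_pi]
    intro u
    rw [hasDerivAt_pi]
    intro i
    rw [hasDerivAt_pi]
    intro j
    have : ∀ t : ℝ, c t u i j
        = A u i j + t * P u i j + g t * Q u i j + (t * g t) * R u i j := by
      intro t; simp [hc]
    simp only [this]
    have hd : HasDerivAt
        (fun t : ℝ => A u i j + t * P u i j + g t * Q u i j + (t * g t) * R u i j)
        (0 + 1 * P u i j + (-1) * Q u i j + (1 * g 0 + 0 * (-1)) * R u i j) 0 := by
      exact (((hasDerivAt_const (0:ℝ) (A u i j)).add
          ((hasDerivAt_id 0).mul_const (P u i j))).add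
          (hgd.mul_const (Q u i j))).add
          (((hasDerivAt_id 0).mul hgd).mul_const (R u i j))
    have : (0 + 1 * P u i j + (-1) * Q u i j + (1 * g 0 + 0 * (-1)) * R u i j)
        = (fun u => P u - Q u) u i j := by
      rw [hg0]; simp [Pi.sub_apply]; ring
    rw [this] at hd
    exact hd
  -- conclude the derivative of F ∘ c vanishes
  have hFc : HasDerivAt (fun t => F (c t)) (fderiv ℝ F A (fun u => P u - Q u)) 0 := by
    have hfd : HasFDerivAt F (fderiv ℝ F A) (c 0) := by
      rw [hc0]; exact (hF A).hasFDerivAt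
    exact hfd.comp_hasDerivAt 0 hcd
  have hev : (fun t => F (c t)) =ᶠ[nhds (0:ℝ)] fun _ => F A := by
    have hcont : ContinuousAt (fun t : ℝ => 1 + δ * t) 0 := by fun_prop
    have := hcont.eventually_ne (by norm_num : (1:ℝ) + δ * 0 ≠ 0)
    exact this.mono fun t ht => hceq t ht
  have hconst : HasDerivAt (fun _ : ℝ => F A) (fderiv ℝ F A (fun u => P u - Q u)) 0 :=
    hFc.congr_of_eventuallyEq hev.symm
  have hzero : fderiv ℝ F A (fun u => P u - Q u) = 0 :=
    hconst.unique (hasDerivAt_const 0 (F A))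
  -- identify the direction with Pi.singles
  have hsingle : (fun u => P u - Q u)
      = Pi.single s (mmul E (A s)) - Pi.single s₀ (mmul (A s₀) E) := by
    funext u
    have hiff : (u + 1 = s₀) ↔ (u = s) := by
      rw [hs₀]
      exact ⟨fun h => add_right_cancel h, fun h => by rw [h]⟩
    simp only [Pi.sub_apply, hP, hQ]
    by_cases h1 : u = s
    · have e1 : (Pi.single s (mmul E (A s)) : ZMod N → Mat m) u = mmul E (A u) := by
        rw [h1]; simp
      rw [if_pos (hiff.mpr h1), e1]
      by_cases h2 : u = s₀
      · have e2 : (Pi.single s₀ (mmul (A s₀) E) : ZMod N → Mat m) u = mmul (A u) E := by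
          rw [h2]; simp
        rw [if_pos h2, e2]
      · rw [if_neg h2, Pi.single_eq_of_ne h2]
    · have e1 : (Pi.single s (mmul E (A s)) : ZMod N → Mat m) u = 0 :=
        Pi.single_eq_of_ne h1 _
      rw [if_neg (fun hc => h1 (hiff.mp hc)), e1]
      by_cases h2 : u = s₀
      · have e2 : (Pi.single s₀ (mmul (A s₀) E) : ZMod N → Mat m) u = mmul (A u) E := by
          rw [h2]; simp
        rw [if_pos h2, e2]
      · rw [if_neg h2, Pi.single_eq_of_ne h2]
  have hlin : fderiv ℝ F A (fun u => P u - Q u)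
      = mtrace (mmul (gLF s) E) - mtrace (mmul (gRF s₀) E) := by
    rw [hsingle, map_sub, hgLF s E, hgRF s₀ E]
  rw [hlin] at hzero
  have := sub_eq_zero.mp hzero
  rw [mtrace_mmul_E, mtrace_mmul_E] at this
  exact this

lemma trace_conj {m : ℕ} (Am B X Y : Mat m) (hAB : mmul Am B = midm m) :
    mtrace (mmul (mmul (mmul B X) Am) (mmul (mmul B Y) Am)) = mtrace (mmul X Y) := by
  have h1 : mmul (mmul (mmul B X) Am) (mmul (mmul B Y) Am)
      = mmul B (mmul X (mmul Y Am)) := by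
    rw [mmul_assoc (mmul B X) Am, ← mmul_assoc Am (mmul B Y) Am,
        ← mmul_assoc Am B Y, hAB, midm_mmul', mmul_assoc B X (mmul Y Am)]
  rw [h1, mtrace_mmul_comm, mmul_assoc, mmul_assoc Y Am B, hAB, mmul_midm']


lemma pointwise_red {m : ℕ} (X X' Y Y' : Mat m)
    (hD : ∀ i j : Fin m, (i : ℕ) ≠ 0 → (X - X') i j = 0)
    (hE : ∀ i j : Fin m, (i : ℕ) ≠ 0 → (Y - Y') i j = 0) :
    rhatW X Y + rhatW X' Y' - rhatT X' Y + rhatT Y' X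
      = mtrace (mmul (X - X') Y) - (1/2) * mtrace (mmul (X - X') (Y - Y'))
        + (1/2) * (mtrace (mmul X' Y') - mtrace (mmul X Y)) := by
  have r5 : rhatT (X - X') (Y - Y') = rhatT (Y - Y') (X - X') := rhatT_symm_row0 _ _ hD hE
  simp only [rhatT_sub_left, rhatT_sub_right] at r5
  have r1 := rhatT_add_swap X Y
  have r2 := rhatT_add_swap X' Y'
  have r3 := rhatT_add_swap X' Y
  have r4 := rhatT_add_swap X Y'
  simp only [rhatW, mtrace_mmul_sub_left, mtrace_mmul_sub_right]
  linarith

/-- On companion matrices, the twisted (Semenov-Tian-Shansky) bracket of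
two `H^N`-gauge-invariant functions `F`, `G` reduces to
`{F,G}(A) = ⟨∇F − 𝒯∇'F, ∇G⟩ − ½⟨∇F − 𝒯∇'F, ∇G − 𝒯∇'G⟩`. -/
theorem stmt17 (m N : ℕ) [NeZero m] [NeZero N] (hm : 2 ≤ m)
    (F G : (ZMod N → Mat m) → ℝ) (hF : Differentiable ℝ F) (hG : Differentiable ℝ G)
    (hinvF : ∀ h hi : ZMod N → Mat m,
      (∀ s, mmul (h s) (hi s) = midm m ∧ mmul (hi s) (h s) = midm m) →
      (∀ s, mvec (h s) (e1vec m) = e1vec m) →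
      ∀ B : ZMod N → Mat m, F (fun s => mmul (h (s + 1)) (mmul (B s) (hi s))) = F B)
    (hinvG : ∀ h hi : ZMod N → Mat m,
      (∀ s, mmul (h s) (hi s) = midm m ∧ mmul (hi s) (h s) = midm m) →
      (∀ s, mvec (h s) (e1vec m) = e1vec m) →
      ∀ B : ZMod N → Mat m, G (fun s => mmul (h (s + 1)) (mmul (B s) (hi s))) = G B)
    -- the point: a tuple of companion matrices with nonvanishing `a⁰`:
    (a : Fin m → ZMod N → ℝ) (ha : ∀ s, a 0 s ≠ 0)
    (A : ZMod N → Mat m) (hAdef : ∀ s, A s = Amat (fun r => a r s))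
    -- the left and right gradients of `F` and `G` at `A`:
    (gLF gRF gLG gRG : ZMod N → Mat m)
    (hgLF : ∀ (s : ZMod N) (ξ : Mat m),
      fderiv ℝ F A (Pi.single s (mmul ξ (A s))) = mtrace (mmul (gLF s) ξ))
    (hgRF : ∀ (s : ZMod N) (ξ : Mat m),
      fderiv ℝ F A (Pi.single s (mmul (A s) ξ)) = mtrace (mmul (gRF s) ξ))
    (hgLG : ∀ (s : ZMod N) (ξ : Mat m),
      fderiv ℝ G A (Pi.single s (mmul ξ (A s))) = mtrace (mmul (gLG s) ξ))
    (hgRG : ∀ (s : ZMod N) (ξ : Mat m),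
      fderiv ℝ G A (Pi.single s (mmul (A s) ξ)) = mtrace (mmul (gRG s) ξ)) :
    -- the twisted bracket equals the reduced expression:
    (∑ s : ZMod N, rhatW (gLF s) (gLG s)) + (∑ s : ZMod N, rhatW (gRF s) (gRG s))
      - (∑ s : ZMod N, rhatT (gRF (s + 1)) (gLG s))
      + (∑ s : ZMod N, rhatT (gRG (s + 1)) (gLF s))
    = (∑ s : ZMod N, mtrace (mmul (gLF s - gRF (s + 1)) (gLG s)))
      - (1 / 2) * ∑ s : ZMod N,
          mtrace (mmul (gLF s - gRF (s + 1)) (gLG s - gRG (s + 1))) := by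
  
  classical
  set B : ZMod N → Mat m := fun s => Binv (fun r => a r s) with hB
  have hANZ : ∀ s : ZMod N, ∀ h : 0 < m, (fun r => a r s) ⟨0, h⟩ ≠ 0 := by
    intro s h
    have h0 : (⟨0, h⟩ : Fin m) = 0 := by
      apply Fin.ext
      simp
    simpa [h0] using ha s
  have hABs : ∀ s, mmul (A s) (B s) = midm m := by
    intro s; rw [hAdef s]; exact Amat_mul_Binv _ (hANZ s)
  have hBAs : ∀ s, mmul (B s) (A s) = midm m := by
    intro s; rw [hAdef s]; exact Binv_mul_Amat _ (hANZ s)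
  have hconjgen : ∀ (gl gr : ZMod N → Mat m) (Φ : (ZMod N → Mat m) → ℝ),
      (∀ (s : ZMod N) (ξ : Mat m),
        fderiv ℝ Φ A (Pi.single s (mmul ξ (A s))) = mtrace (mmul (gl s) ξ)) →
      (∀ (s : ZMod N) (ξ : Mat m),
        fderiv ℝ Φ A (Pi.single s (mmul (A s) ξ)) = mtrace (mmul (gr s) ξ)) →
      ∀ s, gr s = mmul (mmul (B s) (gl s)) (A s) := by
    intro gl gr Φ hgl hgr s
    funext l k
    have h1 : mmul (A s) (Ematrix k l)
        = mmul (mmul (mmul (A s) (Ematrix k l)) (B s)) (A s) := by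
      rw [mmul_assoc, hBAs s, mmul_midm']
    have h2 := hgr s (Ematrix k l)
    rw [h1, hgl s (mmul (mmul (A s) (Ematrix k l)) (B s))] at h2
    rw [mtrace_mmul_E] at h2
    have h3 : mtrace (mmul (gl s) (mmul (mmul (A s) (Ematrix k l)) (B s)))
        = mtrace (mmul (mmul (mmul (B s) (gl s)) (A s)) (Ematrix k l)) := by
      rw [← mmul_assoc (gl s) (mmul (A s) (Ematrix k l)) (B s), mtrace_mmul_comm,
          ← mmul_assoc (B s) (gl s) (mmul (A s) (Ematrix k l)),
          ← mmul_assoc (mmul (B s) (gl s)) (A s) (Ematrix k l)]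
    rw [h3, mtrace_mmul_E] at h2
    exact h2.symm
  have hRF := hconjgen gLF gRF F hgLF hgRF
  have hRG := hconjgen gLG gRG G hgLG hgRG
  have h2tr : ∀ s, mtrace (mmul (gRF s) (gRG s)) = mtrace (mmul (gLF s) (gLG s)) := by
    intro s; rw [hRF s, hRG s]; exact trace_conj (A s) (B s) _ _ (hABs s)
  have hDF : ∀ (s : ZMod N) (i j : Fin m), (i : ℕ) ≠ 0 → (gLF s - gRF (s + 1)) i j = 0 := by
    intro s i j hi
    have := grad_row_support F hF hinvF A gLF gRF hgLF hgRF j i hi s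
    simp only [Pi.sub_apply]
    rw [this, sub_self]
  have hDG : ∀ (s : ZMod N) (i j : Fin m), (i : ℕ) ≠ 0 → (gLG s - gRG (s + 1)) i j = 0 := by
    intro s i j hi
    have := grad_row_support G hG hinvG A gLG gRG hgLG hgRG j i hi s
    simp only [Pi.sub_apply]
    rw [this, sub_self]
  have key : ∀ s : ZMod N,
      rhatW (gLF s) (gLG s) + rhatW (gRF (s + 1)) (gRG (s + 1))
        - rhatT (gRF (s + 1)) (gLG s) + rhatT (gRG (s + 1)) (gLF s)
      = mtrace (mmul (gLF s - gRF (s + 1)) (gLG s))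
        - (1/2) * mtrace (mmul (gLF s - gRF (s + 1)) (gLG s - gRG (s + 1)))
        + (1/2) * (mtrace (mmul (gRF (s + 1)) (gRG (s + 1)))
            - mtrace (mmul (gLF s) (gLG s))) :=
    fun s => pointwise_red (gLF s) (gRF (s + 1)) (gLG s) (gRG (s + 1)) (hDF s) (hDG s)
  have hshift : (∑ s : ZMod N, rhatW (gRF s) (gRG s))
      = ∑ s : ZMod N, rhatW (gRF (s + 1)) (gRG (s + 1)) :=
    (Fintype.sum_equiv (Equiv.addRight (1 : ZMod N))
      (fun s => rhatW (gRF (s + 1)) (gRG (s + 1)))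
      (fun s => rhatW (gRF s) (gRG s)) (fun s => rfl)).symm
  have hsumtr : (∑ s : ZMod N, mtrace (mmul (gRF (s + 1)) (gRG (s + 1))))
      = ∑ s : ZMod N, mtrace (mmul (gLF s) (gLG s)) := by
    rw [Fintype.sum_equiv (Equiv.addRight (1 : ZMod N))
        (fun s => mtrace (mmul (gRF (s + 1)) (gRG (s + 1))))
        (fun s => mtrace (mmul (gRF s) (gRG s))) (fun s => rfl)]
    exact Finset.sum_congr rfl fun s _ => h2tr s
  rw [hshift]
  have hbig : ((∑ s : ZMod N, rhatW (gLF s) (gLG s))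
        + (∑ s : ZMod N, rhatW (gRF (s + 1)) (gRG (s + 1)))
        - (∑ s : ZMod N, rhatT (gRF (s + 1)) (gLG s))
        + (∑ s : ZMod N, rhatT (gRG (s + 1)) (gLF s)))
      = ∑ s : ZMod N, (rhatW (gLF s) (gLG s) + rhatW (gRF (s + 1)) (gRG (s + 1))
          - rhatT (gRF (s + 1)) (gLG s) + rhatT (gRG (s + 1)) (gLF s)) := by
    rw [← Finset.sum_add_distrib, ← Finset.sum_sub_distrib, ← Finset.sum_add_distrib]
  rw [hbig, Finset.sum_congr rfl (fun s _ => key s)]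
  rw [Finset.sum_add_distrib, Finset.sum_sub_distrib]
  have hzero : (∑ s : ZMod N, (1/2) * (mtrace (mmul (gRF (s + 1)) (gRG (s + 1)))
      - mtrace (mmul (gLF s) (gLG s)))) = 0 := by
    rw [← Finset.mul_sum, Finset.sum_sub_distrib, hsumtr, sub_self, mul_zero]
  rw [hzero, add_zero, ← Finset.mul_sum]
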